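/- Every self-embedding of a tree is either elliptic, hyperbolic, or parabolic, and these three cases are mutually exclusive. -/

import Mathlib

open SimpleGraph

variable {V : Type*}

/-- `g` is a self-embedding of `G`: injective and adjacency-preserving. -/
def IsEmb (G : SimpleGraph V) (g : V → V) : Prop :=
  Function.Injective g ∧ ∀ u v : V, G.Adj u v → G.Adj (g u) (g v)

/-- A ray in `G`: a one-way infinite path. -/
structure GRay (G : SimpleGraph V) where
  f : ℕ → V
  inj : Function.Injective f
  adj : ∀ n, G.Adj (f n) (f (n + 1))

/-- Two rays are equivalent (lie in the same end): for every vertex `v` they have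
tails avoiding `v` lying in the same component of `G − v`. -/
def RayEquiv (G : SimpleGraph V) (R S : GRay G) : Prop :=
  ∀ v : V, ∃ m n : ℕ, (∀ i, m ≤ i → R.f i ≠ v) ∧ (∀ j, n ≤ j → S.f j ≠ v) ∧
    ∃ w : G.Walk (R.f m) (S.f n), v ∉ w.support

/-- `g` fixes the end represented by the ray `R`: the image ray is equivalent to `R`. -/
def FixesEnd (G : SimpleGraph V) (g : V → V) (R : GRay G) : Prop :=
  ∃ S : GRay G, (∀ n, S.f n = g (R.f n)) ∧ RayEquiv G S R

def FixesVertex (g : V → V) : Prop := ∃ v, g v = v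

/-- `g` fixes an edge setwise (possibly swapping its endpoints). -/
def FixesEdge (G : SimpleGraph V) (g : V → V) : Prop :=
  ∃ u v : V, G.Adj u v ∧ ((g u = u ∧ g v = v) ∨ (g u = v ∧ g v = u))

/-- `g` fixes setwise a non-empty finite subtree of `G`. -/
def FixesFiniteSubtree (G : SimpleGraph V) (g : V → V) : Prop :=
  ∃ S : Set V, S.Nonempty ∧ S.Finite ∧ (G.induce S).Connected ∧ g '' S = S

/-- `R` is a ray with `g(R) ⊆ R`; for non-elliptic `g` its end is the direction `g⁺`. -/
def DirectionRay (G : SimpleGraph V) (g : V → V) (R : GRay G) : Prop :=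
  ∀ n, ∃ m, g (R.f n) = R.f m

/-- `w` lies in the component of `G − x` containing the end of `R`. -/
def InComp (G : SimpleGraph V) (x : V) (R : GRay G) (w : V) : Prop :=
  ∃ m, (∀ i, m ≤ i → R.f i ≠ x) ∧ ∃ p : G.Walk w (R.f m), x ∉ p.support

/-- A sequence of vertices converges to the end represented by `R`. -/
def ConvergesTo (G : SimpleGraph V) (x : ℕ → V) (R : GRay G) : Prop :=
  ∀ v : V, ∃ N : ℕ, ∀ n, N ≤ n → InComp G v R (x n)

/-- `M` is a submonoid of `Emb(G)`. -/
def IsEmbMonoid (G : SimpleGraph V) (M : Set (V → V)) : Prop :=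
  (∀ g ∈ M, IsEmb G g) ∧ (id ∈ M) ∧ ∀ g ∈ M, ∀ h ∈ M, (g ∘ h) ∈ M

/-- The end of `R` is an accumulation point of the orbit of `v0` under `M`:
every basic neighbourhood of the end of `R` meets the orbit. -/
def InLimitSet (G : SimpleGraph V) (M : Set (V → V)) (v0 : V) (R : GRay G) : Prop :=
  ∀ x : V, ∃ g ∈ M, InComp G x R (g v0)

/-- A self-embedding is elliptic if it fixes a non-empty finite subtree. -/
def Elliptic (G : SimpleGraph V) (g : V → V) : Prop := FixesFiniteSubtree G g

/-- `g` is hyperbolic: not elliptic and it fixes exactly two ends. -/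
def Hyperbolic (G : SimpleGraph V) (g : V → V) : Prop :=
  ¬ Elliptic G g ∧ ∃ R1 R2 : GRay G, ¬ RayEquiv G R1 R2 ∧
    FixesEnd G g R1 ∧ FixesEnd G g R2 ∧
    ∀ S : GRay G, FixesEnd G g S → RayEquiv G S R1 ∨ RayEquiv G S R2

/-- `g` is parabolic: not elliptic and it fixes exactly one end. -/
def Parabolic (G : SimpleGraph V) (g : V → V) : Prop :=
  ¬ Elliptic G g ∧ ∃ R : GRay G, FixesEnd G g R ∧
    ∀ S : GRay G, FixesEnd G g S → RayEquiv G S R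


namespace Tk
variable {G : SimpleGraph V}

/-- eventually the ray avoids any given vertex -/
lemma tailAvoid (R : GRay G) (v : V) : ∃ M, ∀ i, M ≤ i → R.f i ≠ v := by
  by_cases h : ∃ t, R.f t = v
  · obtain ⟨t, ht⟩ := h
    exact ⟨t+1, fun i hi hv => by
      have : i = t := R.inj (hv.trans ht.symm)
      omega⟩
  · exact ⟨0, fun i _ hv => h ⟨i, hv⟩⟩

lemma tailAvoidList (R : GRay G) (l : List V) : ∃ M, ∀ i, M ≤ i → R.f i ∉ l := by
  induction l with
  | nil => exact ⟨0, by simp⟩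
  | cons a l ih =>
      obtain ⟨M1, h1⟩ := ih
      obtain ⟨M2, h2⟩ := tailAvoid R a
      exact ⟨max M1 M2, fun i hi => by
        simp only [List.mem_cons, not_or]
        exact ⟨h2 i (le_trans (le_max_right _ _) hi), h1 i (le_trans (le_max_left _ _) hi)⟩⟩

/-- segment of a ray as a walk -/
def raySeg (R : GRay G) (i : ℕ) : (d : ℕ) → G.Walk (R.f i) (R.f (i + d))
  | 0 => Walk.nil
  | d+1 => (raySeg R i d).concat (R.adj (i + d))

lemma raySeg_support (R : GRay G) (i d : ℕ) :
    ∀ x ∈ (raySeg R i d).support, ∃ k, i ≤ k ∧ k ≤ i + d ∧ R.f k = x := by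
  induction d with
  | zero => intro x hx; simp [raySeg] at hx; exact ⟨i, le_refl _, le_refl _, hx.symm⟩
  | succ d ih =>
      intro x hx
      rw [raySeg, Walk.support_concat] at hx
      rw [List.mem_append] at hx
      rcases hx with hx | hx
      · obtain ⟨k, h1, h2, h3⟩ := ih x hx; exact ⟨k, h1, by omega, h3⟩
      · simp only [List.mem_singleton] at hx
        exact ⟨i + d + 1, by omega, by omega, by rw [hx]; ring_nf⟩


/-- walk along a ray between indices -/
def raySegB (R : GRay G) {i j : ℕ} (hij : i ≤ j) : G.Walk (R.f i) (R.f j) :=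
  (raySeg R i (j - i)).copy rfl (by rw [Nat.add_sub_cancel' hij])

lemma raySegB_support (R : GRay G) {i j : ℕ} (hij : i ≤ j) :
    ∀ x ∈ (raySegB R hij).support, ∃ k, i ≤ k ∧ k ≤ j ∧ R.f k = x := by
  intro x hx
  rw [raySegB, Walk.support_copy] at hx
  obtain ⟨k, h1, h2, h3⟩ := raySeg_support R i (j - i) x hx
  exact ⟨k, h1, by omega, h3⟩

lemma raySegB_avoid (R : GRay G) {i j : ℕ} (hij : i ≤ j) {x : V}
    (h : ∀ k, i ≤ k → R.f k ≠ x) : x ∉ (raySegB R hij).support := by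
  intro hx
  obtain ⟨k, h1, _, h3⟩ := raySegB_support R hij x hx
  exact h k h1 h3

/-- the tails of `R` and `S` are on the same side of `x` -/
def Same (x : V) (R S : GRay G) : Prop :=
  ∃ m n : ℕ, (∀ i, m ≤ i → R.f i ≠ x) ∧ (∀ j, n ≤ j → S.f j ≠ x) ∧
    ∃ w : G.Walk (R.f m) (S.f n), x ∉ w.support

/-- the tails of `R` and `S` are separated by `x` -/
def Dd (x : V) (R S : GRay G) : Prop :=
  ∃ M : ℕ, ∀ m n, M ≤ m → M ≤ n →
    R.f m ≠ x ∧ S.f n ≠ x ∧ ∀ w : G.Walk (R.f m) (S.f n), x ∈ w.support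

lemma Same.symm {x : V} {R S : GRay G} (h : Same x R S) : Same x S R := by
  obtain ⟨m, n, h1, h2, w, hw⟩ := h
  exact ⟨n, m, h2, h1, w.reverse, by rwa [Walk.support_reverse, List.mem_reverse]⟩

lemma Dd.symm {x : V} {R S : GRay G} (h : Dd x R S) : Dd x S R := by
  obtain ⟨M, hM⟩ := h
  refine ⟨M, fun m n hm hn => ?_⟩
  obtain ⟨h1, h2, h3⟩ := hM n m hn hm
  exact ⟨h2, h1, fun w => by
    have := h3 w.reverse
    rwa [Walk.support_reverse, List.mem_reverse] at this⟩

/-- bump the witnesses of `Same` above any threshold -/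
lemma Same.bump {x : V} {R S : GRay G} (h : Same x R S) (M : ℕ) :
    ∃ m n, M ≤ m ∧ M ≤ n ∧ (∀ i, m ≤ i → R.f i ≠ x) ∧ (∀ j, n ≤ j → S.f j ≠ x) ∧
      ∃ w : G.Walk (R.f m) (S.f n), x ∉ w.support := by
  obtain ⟨m, n, h1, h2, w, hw⟩ := h
  refine ⟨max m M, max n M, le_max_right _ _, le_max_right _ _,
    fun i hi => h1 i (le_trans (le_max_left _ _) hi),
    fun j hj => h2 j (le_trans (le_max_left _ _) hj), ?_⟩
  refine ⟨((raySegB R (le_max_left m M)).reverse.append w).append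
    (raySegB S (le_max_left n M)), ?_⟩
  rw [Walk.mem_support_append_iff, Walk.mem_support_append_iff, Walk.support_reverse,
    List.mem_reverse]
  push_neg
  exact ⟨⟨raySegB_avoid R _ h1, hw⟩, raySegB_avoid S _ h2⟩

lemma not_same_of_D {x : V} {R S : GRay G} (hD : Dd x R S) (hS : Same x R S) : False := by
  obtain ⟨M, hM⟩ := hD
  obtain ⟨m, n, hm, hn, _, _, w, hw⟩ := hS.bump M
  exact hw ((hM m n hm hn).2.2 w)

lemma same_or_D (x : V) (R S : GRay G) : Same x R S ∨ Dd x R S := by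
  classical
  by_cases h : Same x R S
  · exact Or.inl h
  · right
    obtain ⟨M1, h1⟩ := tailAvoid R x
    obtain ⟨M2, h2⟩ := tailAvoid S x
    refine ⟨max M1 M2, fun m n hm hn => ?_⟩
    refine ⟨h1 m (by omega), h2 n (by omega), fun w => ?_⟩
    by_contra hw
    exact h ⟨m, n, fun i hi => h1 i (by omega), fun j hj => h2 j (by omega), w, hw⟩

lemma Same.trans {x : V} {R S T : GRay G} (h1 : Same x R S) (h2 : Same x S T) :
    Same x R T := by
  obtain ⟨m, n, a1, a2, w1, hw1⟩ := h1
  obtain ⟨m', n', b1, b2, w2, hw2⟩ := h2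
  -- connect S.f n to S.f m' along the ray
  rcases le_total n m' with hle | hle
  · refine ⟨m, n', a1, b2, (w1.append (raySegB S hle)).append w2, ?_⟩
    rw [Walk.mem_support_append_iff, Walk.mem_support_append_iff]
    push_neg
    exact ⟨⟨hw1, raySegB_avoid S _ a2⟩, hw2⟩
  · refine ⟨m, n', a1, b2, (w1.append (raySegB S hle).reverse).append w2, ?_⟩
    rw [Walk.mem_support_append_iff, Walk.mem_support_append_iff, Walk.support_reverse,
      List.mem_reverse]
    push_neg
    exact ⟨⟨hw1, raySegB_avoid S _ b1⟩, hw2⟩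

lemma Dd_of_same_left {x : V} {R R' S : GRay G} (hS : Same x R' R) (hD : Dd x R S) :
    Dd x R' S := by
  classical
  rcases same_or_D x R' S with h | h
  · exact absurd (hS.symm.trans h) (fun c => not_same_of_D hD c)
  · exact h

lemma Dd_of_same_right {x : V} {R S S' : GRay G} (hS : Same x S' S) (hD : Dd x R S) :
    Dd x R S' := (Dd_of_same_left hS hD.symm).symm

lemma exists_D_of_not_rayEquiv {R S : GRay G} (h : ¬ RayEquiv G R S) :
    ∃ x, Dd x R S := by
  classical
  rw [RayEquiv] at h
  push_neg at h
  obtain ⟨v, hv⟩ := h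
  refine ⟨v, ?_⟩
  rcases same_or_D v R S with hs | hd
  · obtain ⟨m, n, h1, h2, w, hw⟩ := hs
    exact absurd hw (by simpa using hv m n h1 h2 w)
  · exact hd

/-- `RayEquiv` is reflexive, symmetric, transitive -/
lemma rayEquiv_refl (R : GRay G) : RayEquiv G R R := by
  intro v
  obtain ⟨M, hM⟩ := tailAvoid R v
  exact ⟨M, M, hM, hM, Walk.nil, by simp; exact fun c => hM M le_rfl c.symm⟩

lemma rayEquiv_symm {R S : GRay G} (h : RayEquiv G R S) : RayEquiv G S R := by
  intro v
  obtain ⟨m, n, h1, h2, w, hw⟩ := h v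
  exact ⟨n, m, h2, h1, w.reverse, by rwa [Walk.support_reverse, List.mem_reverse]⟩

lemma rayEquiv_iff_same : ∀ {R S : GRay G}, RayEquiv G R S ↔ ∀ x, Same x R S := by
  intro R S
  constructor
  · intro h x
    obtain ⟨m, n, h1, h2, w, hw⟩ := h x
    exact ⟨m, n, h1, h2, w, hw⟩
  · intro h v
    obtain ⟨m, n, h1, h2, w, hw⟩ := h v
    exact ⟨m, n, h1, h2, w, hw⟩

lemma rayEquiv_trans {R S T : GRay G} (h1 : RayEquiv G R S) (h2 : RayEquiv G S T) :
    RayEquiv G R T := by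
  rw [rayEquiv_iff_same] at *
  exact fun x => (h1 x).trans (h2 x)

lemma not_rayEquiv_of_D {R S : GRay G} {x : V} (h : Dd x R S) : ¬ RayEquiv G R S := by
  intro he
  exact not_same_of_D h (rayEquiv_iff_same.mp he x)


section Tree
variable (hT : G.IsTree)
include hT

noncomputable def tpath (u v : V) : G.Walk u v := (hT.existsUnique_path u v).choose

lemma tpath_isPath (u v : V) : (tpath hT u v).IsPath := (hT.existsUnique_path u v).choose_spec.1

lemma tpath_unique {u v : V} (p : G.Walk u v) (hp : p.IsPath) : p = tpath hT u v :=
  (hT.existsUnique_path u v).choose_spec.2 p hp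

/-- any path in a tree is a geodesic -/
lemma path_length_eq_dist {u v : V} (p : G.Walk u v) (hp : p.IsPath) :
    p.length = G.dist u v := by
  classical
  obtain ⟨w, hw⟩ := SimpleGraph.Connected.exists_walk_length_eq_dist hT.isConnected u v
  have hb : w.bypass.IsPath := Walk.bypass_isPath w
  have h1 : w.bypass.length ≤ G.dist u v := hw ▸ Walk.length_bypass_le w
  have h2 : G.dist u v ≤ w.bypass.length := dist_le _
  have hpl : p.length = w.bypass.length := by
    rw [(tpath_unique hT p hp).trans (tpath_unique hT w.bypass hb).symm]
  omega

lemma length_tpath (u v : V) : (tpath hT u v).length = G.dist u v :=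
  path_length_eq_dist hT _ (tpath_isPath hT u v)

/-- every walk passes through all vertices of the unique path -/
lemma tpath_support_subset {u v : V} (w : G.Walk u v) :
    (tpath hT u v).support ⊆ w.support := by
  classical
  have : w.bypass = tpath hT u v := tpath_unique hT _ (Walk.bypass_isPath w)
  rw [← this]; exact Walk.support_bypass_subset w

lemma mem_walk_of_mem_tpath {u v x : V} (hx : x ∈ (tpath hT u v).support) (w : G.Walk u v) :
    x ∈ w.support := tpath_support_subset hT w hx

/-- distance additivity when splitting a path at a vertex -/
lemma dist_split {u v x : V} (p : G.Walk u v) (hp : p.IsPath) (hx : x ∈ p.support) :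
    G.dist u v = G.dist u x + G.dist x v := by
  classical
  have hs := Walk.take_spec p hx
  have h1 : (p.takeUntil x hx).IsPath := hp.takeUntil hx
  have h2 : (p.dropUntil x hx).IsPath := hp.dropUntil hx
  have hl : (p.takeUntil x hx).length + (p.dropUntil x hx).length = p.length := by
    rw [← Walk.length_append, hs]
  rw [← path_length_eq_dist hT p hp, ← path_length_eq_dist hT _ h1,
    ← path_length_eq_dist hT _ h2, hl]

lemma dist_split' {u v x : V} (hx : x ∈ (tpath hT u v).support) :
    G.dist u v = G.dist u x + G.dist x v :=
  dist_split hT _ (tpath_isPath hT u v) hx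

omit hT in
/-- concat is a path iff new vertex not in support -/
lemma concat_isPath_iff {u v w : V} (p : G.Walk u v) (h : G.Adj v w) :
    (p.concat h).IsPath ↔ p.IsPath ∧ w ∉ p.support := by
  rw [← Walk.isPath_reverse_iff, Walk.reverse_concat, Walk.cons_isPath_iff,
    Walk.isPath_reverse_iff, Walk.support_reverse, List.mem_reverse]

/-- reverse of the unique path -/
lemma tpath_reverse (u v : V) : (tpath hT u v).reverse = tpath hT v u :=
  tpath_unique hT _ ((tpath_isPath hT u v).reverse)

lemma mem_tpath_symm {u v x : V} (hx : x ∈ (tpath hT u v).support) :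
    x ∈ (tpath hT v u).support := by
  rw [← tpath_reverse hT, Walk.support_reverse, List.mem_reverse]; exact hx


/-- adjacent vertices have distances to any vertex differing by exactly one -/
lemma adj_dist_cases {a a' b : V} (h : G.Adj a a') :
    G.dist a b = G.dist a' b + 1 ∨ G.dist a' b = G.dist a b + 1 := by
  classical
  have hr := hT.isConnected
  obtain ⟨p, hp, hpl⟩ := SimpleGraph.Reachable.exists_path_of_dist (hr a b)
  obtain ⟨q, hq, hql⟩ := SimpleGraph.Reachable.exists_path_of_dist (hr a' b)
  -- dist a b ≤ dist a' b + 1 and vice versa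
  have h1 : G.dist a b ≤ G.dist a' b + 1 := by
    have := dist_le (Walk.cons h q); simpa [hql] using this
  have h2 : G.dist a' b ≤ G.dist a b + 1 := by
    have := dist_le (Walk.cons h.symm p); simpa [hpl] using this
  rcases Nat.lt_trichotomy (G.dist a b) (G.dist a' b) with hlt | heq | hgt
  · right; omega
  · -- equal distances: contradiction
    exfalso
    by_cases hmem : a' ∈ p.support
    · have := dist_split hT p hp hmem
      have h3 : G.dist a a' = 1 := dist_eq_one_iff_adj.mpr h
      have h4 : 1 ≤ G.dist a a' := by omega
      have h5 : G.dist a' b ≤ G.dist a b := by omega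
      -- dist a b = dist a a' + dist a' b = 1 + dist a' b
      omega
    · have hcons : (Walk.cons h.symm p).IsPath := hp.cons hmem
      have := path_length_eq_dist hT _ hcons
      simp only [Walk.length_cons] at this
      omega
  · left; omega

/-- distance from the start to the i-th vertex of a path is i -/
lemma dist_getVert {u v : V} (p : G.Walk u v) (hp : p.IsPath) :
    ∀ i, i ≤ p.length → G.dist u (p.getVert i) = i := by
  classical
  induction p with
  | nil => intro i hi; simp at hi; simp [hi]
  | @cons a a' w h q ih =>
      intro i hi
      cases i with
      | zero => simp
      | succ i =>
          simp only [Walk.length_cons] at hi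
          have hq : q.IsPath := hp.of_cons
          have hx := ih hq i (by omega)
          set x := q.getVert i with hxdef
          have hxs : x ∈ q.support :=
            Walk.mem_support_iff_exists_getVert.mpr ⟨i, rfl, by omega⟩
          have htake : (q.takeUntil x hxs).IsPath := hq.takeUntil hxs
          have htl : (q.takeUntil x hxs).length = i := by
            have := path_length_eq_dist hT _ htake; omega
          have hna : a ∉ (q.takeUntil x hxs).support := by
            intro hmem
            have : a ∈ q.support := Walk.support_takeUntil_subset q hxs hmem
            exact (Walk.cons_isPath_iff h q).mp hp |>.2 this
          have hcons : (Walk.cons h (q.takeUntil x hxs)).IsPath := htake.cons hna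
          have := path_length_eq_dist hT _ hcons
          simp only [Walk.length_cons, htl] at this
          simpa [Walk.getVert_cons_succ] using this.symm

/-- distinct indices give distinct vertices on a path -/
lemma getVert_inj {u v : V} (p : G.Walk u v) (hp : p.IsPath) {i j : ℕ}
    (hi : i ≤ p.length) (hj : j ≤ p.length) (hij : i ≠ j) :
    p.getVert i ≠ p.getVert j := by
  intro hEq
  have h1 := dist_getVert hT p hp i hi
  have h2 := dist_getVert hT p hp j hj
  rw [hEq] at h1; omega

/-- distance between two vertices on a path -/
lemma dist_getVert_getVert {u v : V} (p : G.Walk u v) (hp : p.IsPath) {i j : ℕ}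
    (hij : i ≤ j) (hj : j ≤ p.length) :
    G.dist (p.getVert i) (p.getVert j) = j - i := by
  classical
  set x := p.getVert i with hx
  have hxs : x ∈ p.support := Walk.mem_support_iff_exists_getVert.mpr ⟨i, rfl, by omega⟩
  have hdrop : (p.dropUntil x hxs).IsPath := hp.dropUntil hxs
  have htake : (p.takeUntil x hxs).IsPath := hp.takeUntil hxs
  have htl : (p.takeUntil x hxs).length = i := by
    have e1 := path_length_eq_dist hT _ htake
    have e2 := dist_getVert hT p hp i (by omega : i ≤ p.length)
    rw [← hx] at e2
    omega
  have hlen : (p.takeUntil x hxs).length + (p.dropUntil x hxs).length = p.length := by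
    rw [← Walk.length_append, Walk.take_spec]
  have hgv : p.getVert j = (p.dropUntil x hxs).getVert (j - i) := by
    conv_lhs => rw [← Walk.take_spec p hxs]
    rw [Walk.getVert_append]
    simp only [htl]
    rw [if_neg (by omega)]
  rw [hgv]
  exact dist_getVert hT _ hdrop (j - i) (by omega)


/-- a vertex at distance 0 is equal (in a connected graph) -/
lemma dist_zero_eq {u v : V} (h : G.dist u v = 0) : u = v := by
  have := hT.isConnected u v
  exact ((SimpleGraph.Reachable.dist_eq_zero_iff this).mp h)

/-- uniqueness of the median: at most one vertex on all three pairwise paths -/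
lemma median_unique {a b c x y : V}
    (hxab : x ∈ (tpath hT a b).support) (hxbc : x ∈ (tpath hT b c).support)
    (hxac : x ∈ (tpath hT a c).support)
    (hyab : y ∈ (tpath hT a b).support) (hybc : y ∈ (tpath hT b c).support)
    (hyac : y ∈ (tpath hT a c).support) : x = y := by
  classical
  have e1 := dist_split' hT hxab
  have e2 := dist_split' hT hyab
  have e3 := dist_split' hT hxac
  have e4 := dist_split' hT hyac
  have e5 := dist_split' hT hxbc
  have e6 := dist_split' hT hybc
  -- first: dist a x = dist a y
  have hax : G.dist a x = G.dist a y := by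
    have c1 := dist_comm (G := G) (u := x) (v := b)
    have c2 := dist_comm (G := G) (u := y) (v := b)
    omega
  -- now use the path a-b: both x and y on it
  by_cases hyd : y ∈ ((tpath hT a b).dropUntil x hxab).support
  · have hdp : ((tpath hT a b).dropUntil x hxab).IsPath := (tpath_isPath hT a b).dropUntil hxab
    have := dist_split hT _ hdp hyd
    -- dist x b = dist x y + dist y b
    have exb : G.dist x b = G.dist x y + G.dist y b := by
      have hq : ((tpath hT a b).dropUntil x hxab).length = G.dist x b :=
        path_length_eq_dist hT _ hdp
      omega
    have : G.dist x y = 0 := by omega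
    exact (dist_zero_eq hT this)
  · have hyt : y ∈ ((tpath hT a b).takeUntil x hxab).support := by
      have h2 := (Walk.mem_support_append_iff (t := y) ((tpath hT a b).takeUntil x hxab)
        ((tpath hT a b).dropUntil x hxab))
      rw [Walk.take_spec] at h2
      rcases h2.mp hyab with h | h
      · exact h
      · exact absurd h hyd
    have htp : ((tpath hT a b).takeUntil x hxab).IsPath := (tpath_isPath hT a b).takeUntil hxab
    have := dist_split hT _ htp hyt
    -- dist a x = dist a y + dist y x
    have eax : G.dist a x = G.dist a y + G.dist y x := by
      have hq : ((tpath hT a b).takeUntil x hxab).length = G.dist a x :=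
        path_length_eq_dist hT _ htp
      omega
    have : G.dist y x = 0 := by omega
    exact (dist_zero_eq hT this).symm

/-- prefix and suffix of a tree path -/
lemma tpath_prefix_subset {u v m : V} (hm : m ∈ (tpath hT u v).support) :
    (tpath hT u m).support ⊆ (tpath hT u v).support := by
  classical
  have h1 : ((tpath hT u v).takeUntil m hm).IsPath := (tpath_isPath hT u v).takeUntil hm
  have h2 : (tpath hT u v).takeUntil m hm = tpath hT u m := tpath_unique hT _ h1
  rw [← h2]
  exact Walk.support_takeUntil_subset _ hm

lemma tpath_suffix_subset {u v m : V} (hm : m ∈ (tpath hT u v).support) :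
    (tpath hT m v).support ⊆ (tpath hT u v).support := by
  classical
  have h1 : ((tpath hT u v).dropUntil m hm).IsPath := (tpath_isPath hT u v).dropUntil hm
  have h2 : (tpath hT u v).dropUntil m hm = tpath hT m v := tpath_unique hT _ h1
  rw [← h2]
  exact Walk.support_dropUntil_subset _ hm

/-- existence of the median -/
lemma median_exists (a b c : V) :
    ∃ x, x ∈ (tpath hT a b).support ∧ x ∈ (tpath hT b c).support ∧
      x ∈ (tpath hT a c).support := by
  classical
  -- induct along the path from a to c
  suffices h : ∀ (n : ℕ) (a : V) (p : G.Walk a c), p.length = n →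
      ∃ x, x ∈ (tpath hT a b).support ∧ x ∈ (tpath hT b c).support ∧
        x ∈ (tpath hT a c).support by
    exact h (tpath hT a c).length a (tpath hT a c) rfl
  intro n
  induction n with
  | zero =>
      intro a p hp
      have : a = c := by
        cases p with
        | nil => rfl
        | cons h q => simp at hp
      subst this
      exact ⟨a, Walk.start_mem_support _, Walk.end_mem_support _, Walk.start_mem_support _⟩
  | succ n ih =>
      intro a p hp
      cases p with
      | nil => simp at hp
      | @cons _ a' _ hadj q =>
        simp only [Walk.length_cons, Nat.succ_inj] at hp
        by_cases hmem : a ∈ (tpath hT b c).support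
        · exact ⟨a, Walk.start_mem_support _, hmem, Walk.start_mem_support _⟩
        · obtain ⟨x, hx1, hx2, hx3⟩ := ih a' q hp
          -- If `a'` lies on `tpath b c` and the path from `a'` to some `d` visits `a`,
          -- then `a ∈ tpath b c`, contradiction.
          have contra : a ∈ (tpath hT b c).support → False := hmem
          have key : ∀ d : V,
              (a ∈ (tpath hT a' d).support → x = a' → a ∈ (tpath hT b c).support) →
              x ∈ (tpath hT a' d).support → x ∈ (tpath hT a d).support := by
            intro d hsub hxd
            rcases adj_dist_cases hT (b := d) hadj with hcase | hcase
            · -- tpath a d = cons hadj (tpath a' d)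
              have hna : a ∉ (tpath hT a' d).support := by
                intro hmem2
                have := dist_split' hT hmem2
                have h1 : G.dist a' a = 1 := dist_eq_one_iff_adj.mpr hadj.symm
                omega
              have hpath : (Walk.cons hadj (tpath hT a' d)).IsPath :=
                (tpath_isPath hT a' d).cons hna
              have heq : Walk.cons hadj (tpath hT a' d) = tpath hT a d :=
                tpath_unique hT _ hpath
              rw [← heq, Walk.support_cons, List.mem_cons]
              exact Or.inr hxd
            · -- tpath a' d = cons hadj.symm (tpath a d)
              have hna : a' ∉ (tpath hT a d).support := by
                intro hmem2
                have := dist_split' hT hmem2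
                have h1 : G.dist a a' = 1 := dist_eq_one_iff_adj.mpr hadj
                omega
              have hpath : (Walk.cons hadj.symm (tpath hT a d)).IsPath :=
                (tpath_isPath hT a d).cons hna
              have heq : Walk.cons hadj.symm (tpath hT a d) = tpath hT a' d :=
                tpath_unique hT _ hpath
              rw [← heq, Walk.support_cons, List.mem_cons] at hxd
              rcases hxd with hxd | hxd
              · -- x = a' : derive a contradiction
                exfalso
                apply contra
                have haa' : a ∈ (tpath hT a' d).support := by
                  rw [← heq, Walk.support_cons, List.mem_cons]
                  exact Or.inr (Walk.start_mem_support _)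
                exact hsub haa' hxd
              · exact hxd
          have ha'bc : x = a' → a' ∈ (tpath hT b c).support := fun hxa => hxa ▸ hx2
          refine ⟨x, key b ?_ hx1, hx2, key c ?_ hx3⟩
          · intro hab hxa
            have h1 : a ∈ (tpath hT b a').support := mem_tpath_symm hT hab
            exact tpath_prefix_subset hT (ha'bc hxa) h1
          · intro hac hxa
            exact tpath_suffix_subset hT (ha'bc hxa) hac


/-- The core construction: a common separator from two partial separators. -/
lemma core {A B C : GRay G} {x y : V}
    (h1 : Dd x A B) (h2 : Dd x C B) (h3 : Dd y A C) (h4 : Dd y B C) :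
    ∃ c, Dd c A B ∧ Dd c A C ∧ Dd c B C := by
  classical
  obtain ⟨M1, hM1⟩ := h1
  obtain ⟨M2, hM2⟩ := h2
  obtain ⟨M3, hM3⟩ := h3
  obtain ⟨M4, hM4⟩ := h4
  obtain ⟨MA, hMA⟩ := tailAvoidList A (tpath hT x y).support
  set m₀ : ℕ := max (max M1 M3) MA with hm₀
  obtain ⟨c, hcxy, hcyA, hcxA⟩ := median_exists hT x y (A.f m₀)
  have hAc : ∀ i, m₀ ≤ i → A.f i ≠ c := by
    intro i hi hc
    exact hMA i (by omega) (hc ▸ hcxy)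
  obtain ⟨MB, hMB⟩ := tailAvoid B c
  obtain ⟨MC, hMC⟩ := tailAvoid C c
  refine ⟨c, ?_, ?_, ?_⟩
  · -- Dd c A B
    refine ⟨max (max m₀ M1) MB, fun m n hm hn => ?_⟩
    refine ⟨hAc m (by omega), hMB n (by omega), fun w => ?_⟩
    by_contra hcw
    have hxw : x ∈ w.support := (hM1 m n (by omega) (by omega)).2.2 w
    by_cases hcx : c = x
    · exact hcw (hcx ▸ hxw)
    have comp : G.Walk (A.f m₀) x :=
      (raySegB A (show m₀ ≤ m by omega)).append (w.takeUntil x hxw)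
    have hcc : c ∈ ((raySegB A (show m₀ ≤ m by omega)).append (w.takeUntil x hxw)).support :=
      tpath_support_subset hT _ (mem_tpath_symm hT hcxA)
    rw [Walk.mem_support_append_iff] at hcc
    rcases hcc with hcc | hcc
    · exact raySegB_avoid A _ hAc hcc
    · exact hcw (Walk.support_takeUntil_subset w hxw hcc)
  · -- Dd c A C
    refine ⟨max (max m₀ M3) MC, fun m n hm hn => ?_⟩
    refine ⟨hAc m (by omega), hMC n (by omega), fun w => ?_⟩
    by_contra hcw
    have hyw : y ∈ w.support := (hM3 m n (by omega) (by omega)).2.2 w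
    by_cases hcy : c = y
    · exact hcw (hcy ▸ hyw)
    have hcc : c ∈ ((raySegB A (show m₀ ≤ m by omega)).append (w.takeUntil y hyw)).support :=
      tpath_support_subset hT _ (mem_tpath_symm hT hcyA)
    rw [Walk.mem_support_append_iff] at hcc
    rcases hcc with hcc | hcc
    · exact raySegB_avoid A _ hAc hcc
    · exact hcw (Walk.support_takeUntil_subset w hyw hcc)
  · -- Dd c B C
    refine ⟨max (max M2 M4) (max MB MC), fun m n hm hn => ?_⟩
    refine ⟨hMB m (by omega), hMC n (by omega), fun w => ?_⟩
    by_contra hcw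
    have hxw : x ∈ w.support := by
      have := (hM2 n m (by omega) (by omega)).2.2 w.reverse
      rwa [Walk.support_reverse, List.mem_reverse] at this
    have hyw : y ∈ w.support := (hM4 m n (by omega) (by omega)).2.2 w
    by_cases hcx : c = x
    · exact hcw (hcx ▸ hxw)
    by_cases hcy : c = y
    · exact hcw (hcy ▸ hyw)
    have hsplit := (Walk.mem_support_append_iff (t := y) (w.takeUntil x hxw)
      (w.dropUntil x hxw))
    rw [Walk.take_spec] at hsplit
    rcases hsplit.mp hyw with hyu | hyr
    · -- y in the first part : get a walk from y to x avoiding c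
      have hy2 : c ∈ (((w.takeUntil x hxw)).dropUntil y hyu).support :=
        tpath_support_subset hT _ (mem_tpath_symm hT hcxy)
      exact hcw (Walk.support_takeUntil_subset w hxw
        (Walk.support_dropUntil_subset _ hyu hy2))
    · -- y in the second part : walk from x to y avoiding c
      have hy2 : c ∈ ((w.dropUntil x hxw).takeUntil y hyr).support :=
        tpath_support_subset hT _ hcxy
      exact hcw (Walk.support_dropUntil_subset w hxw
        (Walk.support_takeUntil_subset _ hyr hy2))

/-- from pairwise separators to a single common separator -/
lemma exists_triple_D {A B C : GRay G}
    (hAB : ∃ x, Dd x A B) (hAC : ∃ y, Dd y A C) (hBC : ∃ z, Dd z B C) :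
    ∃ c, Dd c A B ∧ Dd c A C ∧ Dd c B C := by
  classical
  obtain ⟨x, hx⟩ := hAB
  rcases same_or_D x C A with sCA | dCA
  · -- C is on A's side of x
    have hxCB : Dd x C B := Dd_of_same_left sCA hx
    obtain ⟨y, hy⟩ := hAC
    rcases same_or_D y B A with sBA | dBA
    · -- B on A's side of y : y seps B C
      have hyBC : Dd y B C := Dd_of_same_left sBA hy
      exact core hT hx hxCB hy hyBC
    · rcases same_or_D y B C with sBC | dBC
      · -- B on C's side of y : y seps B A
        have hyBA : Dd y B A := Dd_of_same_left sBC hy.symm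
        obtain ⟨c, u1, u2, u3⟩ := core hT (A := C) (B := B) (C := A) (x := x) (y := y)
          hxCB hx hy.symm hyBA
        exact ⟨c, u3.symm, u2.symm, u1.symm⟩
      · -- y separates B from both A and C : y is a triple separator
        exact ⟨y, dBA.symm, hy, dBC⟩
  · rcases same_or_D x C B with sCB | dCB
    · -- C on B's side of x : x seps C A
      have hxCA : Dd x C A := Dd_of_same_left sCB hx.symm
      obtain ⟨z, hz⟩ := hBC
      rcases same_or_D z A B with sABz | dABz
      · -- A on B's side of z : z seps A C
        have hzAC : Dd z A C := Dd_of_same_left sABz hz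
        obtain ⟨c, u1, u2, u3⟩ := core hT (A := B) (B := A) (C := C) (x := x) (y := z)
          hx.symm hxCA hz hzAC
        exact ⟨c, u1.symm, u3, u2⟩
      · rcases same_or_D z A C with sACz | dACz
        · -- A on C's side of z : z seps A B
          have hzAB : Dd z A B := Dd_of_same_left sACz hz.symm
          obtain ⟨c, u1, u2, u3⟩ := core hT (A := C) (B := A) (C := B) (x := x) (y := z)
            hxCA hx.symm hz.symm hzAB
          exact ⟨c, u3, u1.symm, u2.symm⟩
        · -- z is a triple separator
          exact ⟨z, dABz, dACz, hz⟩
    · -- x is a triple separator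
      exact ⟨x, hx, dCA.symm, dCB.symm⟩

/-- the common separator is unique -/
lemma triple_D_unique {A B C : GRay G} {c c' : V}
    (h1 : Dd c A B) (h2 : Dd c A C) (h3 : Dd c B C)
    (h1' : Dd c' A B) (h2' : Dd c' A C) (h3' : Dd c' B C) : c = c' := by
  classical
  obtain ⟨N1, k1⟩ := h1; obtain ⟨N2, k2⟩ := h2; obtain ⟨N3, k3⟩ := h3
  obtain ⟨N1', k1'⟩ := h1'; obtain ⟨N2', k2'⟩ := h2'; obtain ⟨N3', k3'⟩ := h3'
  set m := max (max (max N1 N2) (max N3 N1')) (max N2' N3') with hm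
  have l1 : c ∈ (tpath hT (A.f m) (B.f m)).support :=
    (k1 m m (by omega) (by omega)).2.2 _
  have l2 : c ∈ (tpath hT (A.f m) (C.f m)).support :=
    (k2 m m (by omega) (by omega)).2.2 _
  have l3 : c ∈ (tpath hT (B.f m) (C.f m)).support :=
    (k3 m m (by omega) (by omega)).2.2 _
  have l1' : c' ∈ (tpath hT (A.f m) (B.f m)).support :=
    (k1' m m (by omega) (by omega)).2.2 _
  have l2' : c' ∈ (tpath hT (A.f m) (C.f m)).support :=
    (k2' m m (by omega) (by omega)).2.2 _
  have l3' : c' ∈ (tpath hT (B.f m) (C.f m)).support :=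
    (k3' m m (by omega) (by omega)).2.2 _
  exact median_unique hT l1 l3 l2 l1' l3' l2'


end Tree

/-- prefix walks along an adjacency-chain -/
def rayWalk (f : ℕ → V) (hadj : ∀ n, G.Adj (f n) (f (n + 1))) : (k : ℕ) → G.Walk (f 0) (f k)
  | 0 => Walk.nil
  | k+1 => (rayWalk f hadj k).concat (hadj k)

lemma rayWalk_length (f : ℕ → V) (hadj : ∀ n, G.Adj (f n) (f (n + 1))) (k : ℕ) :
    (rayWalk f hadj k).length = k := by
  induction k with
  | zero => rfl
  | succ k ih => rw [rayWalk, Walk.length_concat, ih]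

lemma rayWalk_getVert (f : ℕ → V) (hadj : ∀ n, G.Adj (f n) (f (n + 1))) (k : ℕ) :
    ∀ j, j ≤ k → (rayWalk f hadj k).getVert j = f j := by
  induction k with
  | zero => intro j hj; interval_cases j; simp [rayWalk]
  | succ k ih =>
      intro j hj
      rw [rayWalk, Walk.concat_eq_append, Walk.getVert_append, rayWalk_length]
      by_cases hjk : j < k
      · rw [if_pos hjk]; exact ih j (by omega)
      · rw [if_neg hjk]
        rcases (by omega : j = k ∨ j = k + 1) with h | h
        · subst h; simp
        · subst h
          have : k + 1 - k = 1 := by omega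
          rw [this]
          simp

lemma rayWalk_isPath (hT : G.IsTree) (f : ℕ → V) (hadj : ∀ n, G.Adj (f n) (f (n + 1)))
    (hnb : ∀ k, f (k + 2) ≠ f k) (k : ℕ) : (rayWalk f hadj k).IsPath := by
  induction k with
  | zero => exact Walk.IsPath.nil
  | succ k ih =>
      rw [rayWalk, concat_isPath_iff]
      refine ⟨ih, fun hmem => ?_⟩
      obtain ⟨j, hj1, hj2⟩ := Walk.mem_support_iff_exists_getVert.mp hmem
      rw [rayWalk_length] at hj2
      rw [rayWalk_getVert f hadj k j hj2] at hj1
      -- f j = f (k+1) with j ≤ k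
      rcases (by omega : j = k ∨ j = k - 1 ∧ 1 ≤ k ∨ j + 2 ≤ k) with h | h | h
      · subst h; exact (hadj j).ne hj1
      · obtain ⟨h, hk1⟩ := h
        subst h
        have h2 := hnb (k - 1)
        rw [show k - 1 + 2 = k + 1 by omega] at h2
        exact h2 hj1.symm
      · -- j ≤ k - 2 : distance contradiction
        have hd : G.dist (f j) (f k) = k - j := by
          have := dist_getVert_getVert hT (rayWalk f hadj k) ih
            (show j ≤ k by omega) (by rw [rayWalk_length])
          rwa [rayWalk_getVert f hadj k j (by omega), rayWalk_getVert f hadj k k le_rfl] at this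
        have hadj1 : G.Adj (f j) (f k) := by
          rw [hj1]; exact (hadj k).symm
        have := dist_eq_one_iff_adj.mpr hadj1
        omega


-- ==== embeddings ====
section Emb
variable {g : V → V} (hg : IsEmb G g)

/-- the graph homomorphism associated to an embedding -/
def embHom (hg : IsEmb G g) : G →g G := ⟨g, fun {a b} h => hg.2 a b h⟩

/-- image of a ray under an embedding -/
def mapRay (hg : IsEmb G g) (R : GRay G) : GRay G where
  f := fun n => g (R.f n)
  inj := hg.1.comp R.inj
  adj := fun n => hg.2 _ _ (R.adj n)

lemma rayEquiv_congr_left {P Q T : GRay G} (h : ∀ n, P.f n = Q.f n)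
    (he : RayEquiv G P T) : RayEquiv G Q T := by
  intro v
  obtain ⟨m, n, h1, h2, w, hw⟩ := he v
  refine ⟨m, n, fun i hi => (h i) ▸ h1 i hi, h2, w.copy (h m) rfl, ?_⟩
  rwa [Walk.support_copy]

/-- transfer a separation statement through the embedding -/
lemma Dd_map (hT : G.IsTree) {x : V} {R S : GRay G} (hD : Dd x R S) :
    Dd (g x) (mapRay hg R) (mapRay hg S) := by
  classical
  obtain ⟨M, hM⟩ := hD
  refine ⟨M, fun m n hm hn => ?_⟩
  obtain ⟨e1, e2, e3⟩ := hM m n hm hn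
  refine ⟨fun c => e1 (hg.1 c), fun c => e2 (hg.1 c), fun w => ?_⟩
  -- the image of the tree path is the tree path of the images
  have hmap : ((tpath hT (R.f m) (S.f n)).map (embHom hg)).IsPath :=
    Walk.map_isPath_of_injective hg.1 (tpath_isPath hT _ _)
  have heq : (tpath hT (R.f m) (S.f n)).map (embHom hg)
      = tpath hT (g (R.f m)) (g (S.f n)) := tpath_unique hT _ hmap
  have hx : x ∈ (tpath hT (R.f m) (S.f n)).support := e3 _
  have hgx : g x ∈ (tpath hT (g (R.f m)) (g (S.f n))).support := by
    rw [← heq]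
    show g x ∈ ((tpath hT (R.f m) (S.f n)).map (embHom hg)).support
    rw [Walk.support_map]
    exact List.mem_map.mpr ⟨x, hx, rfl⟩
  exact tpath_support_subset hT w hgx

/-- pull a separation on image rays back to the original rays -/
lemma Dd_pull {x : V} {R S : GRay G}
    (hD : Dd x (mapRay hg R) (mapRay hg S))
    (e1 : RayEquiv G (mapRay hg R) R) (e2 : RayEquiv G (mapRay hg S) S) :
    Dd x R S := by
  have s1 : Same x R (mapRay hg R) := (rayEquiv_iff_same.mp e1 x).symm
  have s2 : Same x S (mapRay hg S) := (rayEquiv_iff_same.mp e2 x).symm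
  exact Dd_of_same_right s2 (Dd_of_same_left s1 hD)

/-- a fixed end gives an equivalence for the image ray -/
lemma fixesEnd_mapRay {R : GRay G} (hF : FixesEnd G g R) :
    RayEquiv G (mapRay hg R) R := by
  obtain ⟨S, hS, hE⟩ := hF
  exact rayEquiv_congr_left (fun n => hS n) hE

/-- Main rigidity: three pairwise inequivalent fixed ends force a fixed vertex. -/
lemma three_fixed_ends_fixesVertex (hg : IsEmb G g) (hT : G.IsTree) {A B C : GRay G}
    (fA : FixesEnd G g A) (fB : FixesEnd G g B) (fC : FixesEnd G g C)
    (nAB : ¬ RayEquiv G A B) (nAC : ¬ RayEquiv G A C) (nBC : ¬ RayEquiv G B C) :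
    FixesVertex g := by
  obtain ⟨c, d1, d2, d3⟩ := exists_triple_D hT
    (exists_D_of_not_rayEquiv nAB) (exists_D_of_not_rayEquiv nAC)
    (exists_D_of_not_rayEquiv nBC)
  have eA := fixesEnd_mapRay hg fA
  have eB := fixesEnd_mapRay hg fB
  have eC := fixesEnd_mapRay hg fC
  have d1' : Dd (g c) A B := Dd_pull hg (Dd_map hg hT d1) eA eB
  have d2' : Dd (g c) A C := Dd_pull hg (Dd_map hg hT d2) eA eC
  have d3' : Dd (g c) B C := Dd_pull hg (Dd_map hg hT d3) eB eC
  exact ⟨c, (triple_D_unique hT d1 d2 d3 d1' d2' d3').symm⟩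

end Emb

-- ==== elliptic helpers ====
lemma elliptic_of_fixesVertex {g : V → V} (h : FixesVertex g) :
    FixesFiniteSubtree G g := by
  obtain ⟨v, hv⟩ := h
  refine ⟨{v}, ⟨v, rfl⟩, Set.finite_singleton v, ?_, by rw [Set.image_singleton, hv]⟩
  haveI : Nonempty ({v} : Set V) := ⟨⟨v, rfl⟩⟩
  refine ⟨fun a b => ?_⟩
  have ha : a = b := by
    rcases a with ⟨a, ha⟩; rcases b with ⟨b, hb⟩
    simp only [Set.mem_singleton_iff] at ha hb
    subst ha; subst hb; rfl
  exact ha ▸ Reachable.refl _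

lemma elliptic_of_fixesEdge {g : V → V} (h : FixesEdge G g) :
    FixesFiniteSubtree G g := by
  obtain ⟨u, v, huv, hfix⟩ := h
  have hne : u ≠ v := huv.ne
  refine ⟨{u, v}, ⟨u, Or.inl rfl⟩, (Set.finite_singleton v).insert u, ?_, ?_⟩
  · haveI : Nonempty ({u, v} : Set V) := ⟨⟨u, Or.inl rfl⟩⟩
    refine ⟨fun a b => ?_⟩
    rcases a with ⟨a, ha⟩; rcases b with ⟨b, hb⟩
    have hadj : ∀ (x y : V) (hx : x ∈ ({u, v} : Set V)) (hy : y ∈ ({u, v} : Set V)),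
        x ≠ y → (G.induce {u, v}).Adj ⟨x, hx⟩ ⟨y, hy⟩ := by
      intro x y hx hy hxy
      show G.Adj x y
      have hx' : x = u ∨ x = v := by simpa using hx
      have hy' : y = u ∨ y = v := by simpa using hy
      rcases hx' with hx' | hx' <;> rcases hy' with hy' | hy' <;> subst hx' <;> subst hy'
      · exact absurd rfl hxy
      · exact huv
      · exact huv.symm
      · exact absurd rfl hxy
    by_cases hab : a = b
    · subst hab
      have : (⟨a, ha⟩ : {x // x ∈ ({u, v} : Set V)}) = ⟨a, hb⟩ := rfl
      exact this ▸ Reachable.refl _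
    · exact (hadj a b ha hb hab).reachable
  · rcases hfix with ⟨h1, h2⟩ | ⟨h1, h2⟩
    · rw [Set.image_pair, h1, h2]
    · rw [Set.image_pair, h1, h2, Set.pair_comm]


section Emb2
variable {g : V → V}

lemma iterate_inj (hg : IsEmb G g) (n : ℕ) : Function.Injective (g^[n]) :=
  Function.Injective.iterate hg.1 n

lemma iterate_adj (hg : IsEmb G g) (n : ℕ) {a b : V} (h : G.Adj a b) :
    G.Adj (g^[n] a) (g^[n] b) := by
  induction n with
  | zero => simpa using h
  | succ n ih =>
      rw [Function.iterate_succ_apply', Function.iterate_succ_apply']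
      exact hg.2 _ _ ih

lemma exists_direction_ray (hT : G.IsTree) (hg : IsEmb G g)
    (hnv : ¬ FixesVertex g) (hne : ¬ FixesEdge G g) :
    ∃ (R : GRay G) (ℓ : ℕ), 0 < ℓ ∧ ∀ k, g (R.f k) = R.f (k + ℓ) := by
  classical
  haveI : Nonempty V := hT.isConnected.nonempty
  set Dset : Set ℕ := {n : ℕ | ∃ v, G.dist v (g v) = n} with hDset
  have hDne : Dset.Nonempty := ⟨_, Classical.arbitrary V, rfl⟩
  set ℓ := sInf Dset with hℓ
  obtain ⟨v₀, hv₀⟩ : ∃ v, G.dist v (g v) = ℓ := Nat.sInf_mem hDne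
  have hmin : ∀ v, ℓ ≤ G.dist v (g v) := fun v => Nat.sInf_le ⟨v, rfl⟩
  have hℓpos : 0 < ℓ := by
    rcases Nat.eq_zero_or_pos ℓ with h | h
    · exfalso
      apply hnv
      refine ⟨v₀, ?_⟩
      have := (hT.isConnected.dist_eq_zero_iff (u := v₀) (v := g v₀)).mp (by omega)
      exact this.symm
    · exact h
  set P := tpath hT v₀ (g v₀) with hP
  have hPlen : P.length = ℓ := by
    rw [path_length_eq_dist hT P (tpath_isPath hT _ _), hv₀]
  set f : ℕ → V := fun k => g^[k / ℓ] (P.getVert (k % ℓ)) with hf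
  -- division facts
  have hdm : ∀ k : ℕ, ℓ * (k / ℓ) + k % ℓ = k := fun k => Nat.div_add_mod k ℓ
  have hmlt : ∀ k : ℕ, k % ℓ < ℓ := fun k => Nat.mod_lt k hℓpos
  -- the adjacency structure
  have hstep : ∀ k, f (k + 1) = g^[k / ℓ] (P.getVert (k % ℓ + 1)) := by
    intro k
    by_cases hcase : k % ℓ + 1 < ℓ
    · have : (k+1) / ℓ = k / ℓ ∧ (k+1) % ℓ = k % ℓ + 1 := by
        rw [Nat.div_mod_unique hℓpos]
        constructor
        · have := hdm k; omega
        · exact hcase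
      rw [hf]; simp only
      rw [this.1, this.2]
    · have hend : k % ℓ + 1 = ℓ := by have := hmlt k; omega
      have : (k+1) / ℓ = k / ℓ + 1 ∧ (k+1) % ℓ = 0 := by
        rw [Nat.div_mod_unique hℓpos]
        constructor
        · have := hdm k; rw [Nat.mul_succ]; omega
        · omega
      rw [hf]; simp only
      rw [this.1, this.2, Function.iterate_succ_apply, Walk.getVert_zero]
      congr 1
      rw [hend, ← hPlen, Walk.getVert_length]
  have hadj : ∀ k, G.Adj (f k) (f (k + 1)) := by
    intro k
    rw [hstep k]
    exact iterate_adj hg _ (Walk.adj_getVert_succ P (by rw [hPlen]; exact hmlt k))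
  -- the translation property
  have hshift : ∀ k, g (f k) = f (k + ℓ) := by
    intro k
    have h1 : (k + ℓ) / ℓ = k / ℓ + 1 := by
      rw [Nat.add_div_right _ hℓpos]
    have h2 : (k + ℓ) % ℓ = k % ℓ := Nat.add_mod_right k ℓ
    rw [hf]; simp only
    rw [h1, h2, Function.iterate_succ_apply']
  -- non-backtracking
  have hnb : ∀ k, f (k + 2) ≠ f k := by
    intro k heq
    rcases Nat.lt_or_ge ℓ 2 with hl1 | hl2
    · -- ℓ = 1
      have hl : ℓ = 1 := by omega
      have hfk : ∀ j : ℕ, f j = g^[j] v₀ := by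
        intro j
        rw [hf]; simp only
        rw [hl, Nat.div_one, Nat.mod_one, Walk.getVert_zero]
      rw [hfk, hfk] at heq
      rw [show k + 2 = k + 2 from rfl, Function.iterate_add_apply] at heq
      have h2 : g^[2] v₀ = v₀ := iterate_inj hg k heq
      have hgg : g (g v₀) = v₀ := by
        rw [show (2:ℕ) = 1 + 1 from rfl, Function.iterate_add_apply] at h2
        simpa using h2
      apply hne
      refine ⟨v₀, g v₀, ?_, Or.inr ⟨rfl, hgg⟩⟩
      rw [← dist_eq_one_iff_adj, hv₀, hl]
    · -- ℓ ≥ 2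
      set r := k % ℓ with hr
      set q := k / ℓ with hq
      have hkeq : ℓ * q + r = k := hdm k
      have hrlt : r < ℓ := hmlt k
      rcases (by omega : r + 2 < ℓ ∨ r = ℓ - 2 ∨ r = ℓ - 1) with hc | hc | hc
      · have hdiv : (k+2) / ℓ = q ∧ (k+2) % ℓ = r + 2 := by
          rw [Nat.div_mod_unique hℓpos]; omega
        rw [hf] at heq; simp only at heq
        rw [hdiv.1, hdiv.2, ← hq, ← hr] at heq
        have := iterate_inj hg q heq
        exact getVert_inj hT P (tpath_isPath hT _ _) (i := r + 2) (j := r)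
          (by omega) (by omega) (by omega) this
      · have hdiv : (k+2) / ℓ = q + 1 ∧ (k+2) % ℓ = 0 := by
          rw [Nat.div_mod_unique hℓpos]
          constructor
          · rw [Nat.mul_succ]; omega
          · omega
        rw [hf] at heq; simp only at heq
        rw [hdiv.1, hdiv.2, ← hq, ← hr, Function.iterate_succ_apply, Walk.getVert_zero] at heq
        have h2 := iterate_inj hg q heq
        have h3 : g v₀ = P.getVert ℓ := by rw [← hPlen, Walk.getVert_length]
        have h5 := h3.symm.trans h2
        exact getVert_inj hT P (tpath_isPath hT _ _) (i := ℓ) (j := r)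
          (by omega) (by omega) (by omega) h5
      · have hdiv : (k+2) / ℓ = q + 1 ∧ (k+2) % ℓ = 1 := by
          rw [Nat.div_mod_unique hℓpos]
          constructor
          · rw [Nat.mul_succ]; omega
          · omega
        rw [hf] at heq; simp only at heq
        rw [hdiv.1, hdiv.2, ← hq, ← hr, Function.iterate_succ_apply] at heq
        have h2 := iterate_inj hg q heq
        -- g (P.getVert 1) = P.getVert (ℓ - 1)
        have h4 : G.dist (P.getVert 1) (g (P.getVert 1)) = ℓ - 2 := by
          rw [h2, hc]
          have := dist_getVert_getVert hT P (tpath_isPath hT _ _)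
            (i := 1) (j := ℓ - 1) (by omega) (by omega)
          rw [this]
          omega
        have := hmin (P.getVert 1)
        omega
  -- injectivity
  have hinj : Function.Injective f := by
    intro i j hij
    by_contra hne'
    rcases Nat.lt_or_ge i j with h | h
    · have hp := rayWalk_isPath hT f hadj hnb j
      have := getVert_inj hT (rayWalk f hadj j) hp (i := i) (j := j)
        (by rw [rayWalk_length]; omega) (by rw [rayWalk_length]) (by omega)
      rw [rayWalk_getVert f hadj j i (by omega), rayWalk_getVert f hadj j j le_rfl] at this
      exact this hij
    · have h' : j < i := by omega
      have hp := rayWalk_isPath hT f hadj hnb i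
      have := getVert_inj hT (rayWalk f hadj i) hp (i := j) (j := i)
        (by rw [rayWalk_length]; omega) (by rw [rayWalk_length]) (by omega)
      rw [rayWalk_getVert f hadj i j (by omega), rayWalk_getVert f hadj i i le_rfl] at this
      exact this hij.symm
  exact ⟨⟨f, hinj, hadj⟩, ℓ, hℓpos, hshift⟩


end Emb2
/-- a ray translated by `g` gives a fixed end -/
lemma fixesEnd_of_shift {g : V → V} (R : GRay G) (ℓ : ℕ) (hpos : 0 < ℓ)
    (hshift : ∀ k, g (R.f k) = R.f (k + ℓ)) : FixesEnd G g R := by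
  refine ⟨⟨fun n => R.f (n + ℓ), fun a b hab => by
      have := R.inj hab; omega, fun n => by
      have := R.adj (n + ℓ)
      rwa [show n + ℓ + 1 = n + 1 + ℓ by omega] at this⟩,
    fun n => (hshift n).symm, ?_⟩
  intro v
  obtain ⟨M, hM⟩ := tailAvoid R v
  refine ⟨M, M + ℓ, fun i hi => hM (i + ℓ) (by omega), fun j hj => hM j (by omega),
    Walk.nil, ?_⟩
  simp only [Walk.support_nil, List.mem_singleton]
  exact fun c => hM (M + ℓ) (by omega) c.symm

/-- non-elliptic embeddings fix an end -/
lemma exists_fixedEnd {g : V → V} (hT : G.IsTree) (hg : IsEmb G g)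
    (hnE : ¬ Elliptic G g) : ∃ R : GRay G, FixesEnd G g R := by
  have hnv : ¬ FixesVertex g := fun h => hnE (elliptic_of_fixesVertex h)
  have hne : ¬ FixesEdge G g := fun h => hnE (elliptic_of_fixesEdge h)
  obtain ⟨R, ℓ, hpos, hshift⟩ := exists_direction_ray hT hg hnv hne
  exact ⟨R, fixesEnd_of_shift R ℓ hpos hshift⟩


end Tk

open Tk in
theorem stmt3 (G : SimpleGraph V) (hT : G.IsTree) (g : V → V) (hg : IsEmb G g) :
    (Elliptic G g ∨ Hyperbolic G g ∨ Parabolic G g) ∧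
      ¬ (Elliptic G g ∧ Hyperbolic G g) ∧ ¬ (Elliptic G g ∧ Parabolic G g) ∧
      ¬ (Hyperbolic G g ∧ Parabolic G g) := by
  classical
  refine ⟨?_, fun h => h.2.1 h.1, fun h => h.2.1 h.1, ?_⟩
  · by_cases hE : Elliptic G g
    · exact Or.inl hE
    · right
      obtain ⟨R, hR⟩ := exists_fixedEnd hT hg hE
      by_cases hP : ∀ S : GRay G, FixesEnd G g S → RayEquiv G S R
      · exact Or.inr ⟨hE, R, hR, hP⟩
      · left
        push_neg at hP
        obtain ⟨S, hSfix, hSne⟩ := hP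
        refine ⟨hE, S, R, hSne, hSfix, hR, ?_⟩
        intro T hTfix
        by_contra hcon
        push_neg at hcon
        obtain ⟨h1, h2⟩ := hcon
        have := three_fixed_ends_fixesVertex hg hT hTfix hSfix hR h1 h2 hSne
        exact hE (elliptic_of_fixesVertex this)
  · rintro ⟨⟨_, R1, R2, hne12, f1, f2, _⟩, ⟨_, R, fR, hall⟩⟩
    exact hne12 (rayEquiv_trans (hall R1 f1) (rayEquiv_symm (hall R2 f2)))
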